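/- Let X_1, …, X_k be i.i.d. random variables with values in a finite set U and common distribution p, let p̂ be the empirical distribution, and let U⁺ = {u : p_u > 0}. If 0 < δ < 1, ε > 0, and k ≥ 2|U⁺| / (ε·δ²), then with probability at least 1 − ε the inequalities d_KL(p̂, p) < δ and d(p̂, p) < δ hold simultaneously. -/

import Mathlib

open Finset
open scoped Classical

/-- The empirical distribution of a sample `v = (X_1, …, X_k)` with values in the
finite set `U`: `p̂_u = (1/k)·#{i : X_i = u}`. -/
noncomputable def empDist {U : Type*} [Fintype U] {k : ℕ} (v : Fin k → U) (u : U) : ℝ :=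
  ((Finset.univ.filter fun i => v i = u).card : ℝ) / k

section Aux

variable {U : Type*} [Fintype U]

private lemma extract_one {β : Type*} [CommMonoid β] {k : ℕ} (i : Fin k) (h : Fin k → β) :
    ∏ m, h m = h i * ∏ m ∈ univ.erase i, h m :=
  (Finset.mul_prod_erase univ h (mem_univ i)).symm

private lemma extract_two {β : Type*} [CommMonoid β] {k : ℕ} {i j : Fin k} (hij : i ≠ j)
    (h : Fin k → β) :
    ∏ m, h m = h i * (h j * ∏ m ∈ (univ.erase i).erase j, h m) := by
  rw [extract_one i h,
      ← Finset.mul_prod_erase (univ.erase i) h (Finset.mem_erase.2 ⟨hij.symm, mem_univ j⟩)]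

private lemma sum_w_one (p : U → ℝ) (hp1 : ∑ u, p u = 1) {k : ℕ} :
    ∑ v : Fin k → U, ∏ m, p (v m) = 1 := by
  have h := Fintype.prod_sum (fun (_ : Fin k) (x : U) => p x)
  rw [← h]
  simp [hp1]

private lemma sum_w_single (p : U → ℝ) (hp1 : ∑ u, p u = 1) {k : ℕ} (i : Fin k) (f : U → ℝ) :
    ∑ v : Fin k → U, (∏ m, p (v m)) * f (v i) = ∑ x, p x * f x := by
  set F : Fin k → U → ℝ := fun m x => if m = i then p x * f x else p x with hF
  have key : ∑ v : Fin k → U, ∏ m, F m (v m) = ∏ m, ∑ x, F m x := (Fintype.prod_sum _).symm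
  have h1 : ∀ v : Fin k → U, (∏ m, p (v m)) * f (v i) = ∏ m, F m (v m) := by
    intro v
    rw [extract_one i (fun m => F m (v m)), extract_one i (fun m => p (v m))]
    have h2 : ∀ m ∈ univ.erase i, F m (v m) = p (v m) := fun m hm => by
      simp [hF, Finset.ne_of_mem_erase hm]
    rw [Finset.prod_congr rfl h2]
    simp only [hF, if_pos rfl]
    ring
  rw [Finset.sum_congr rfl (fun v _ => h1 v), key, extract_one i]
  have h3 : ∀ m ∈ univ.erase i, (∑ x, F m x) = 1 := fun m hm => by
    simp only [hF, if_neg (Finset.ne_of_mem_erase hm)]; exact hp1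
  rw [Finset.prod_congr rfl h3, Finset.prod_const_one, mul_one]
  simp [hF]

private lemma sum_w_pair (p : U → ℝ) (hp1 : ∑ u, p u = 1) {k : ℕ} {i j : Fin k} (hij : i ≠ j)
    (f g : U → ℝ) :
    ∑ v : Fin k → U, (∏ m, p (v m)) * (f (v i) * g (v j))
      = (∑ x, p x * f x) * (∑ x, p x * g x) := by
  set F : Fin k → U → ℝ :=
    fun m x => if m = i then p x * f x else if m = j then p x * g x else p x with hF
  have key : ∑ v : Fin k → U, ∏ m, F m (v m) = ∏ m, ∑ x, F m x := (Fintype.prod_sum _).symm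
  have h1 : ∀ v : Fin k → U, (∏ m, p (v m)) * (f (v i) * g (v j)) = ∏ m, F m (v m) := by
    intro v
    rw [extract_two hij (fun m => F m (v m)), extract_two hij (fun m => p (v m))]
    have h2 : ∀ m ∈ (univ.erase i).erase j, F m (v m) = p (v m) := fun m hm => by
      have hmj := Finset.ne_of_mem_erase hm
      have hmi := Finset.ne_of_mem_erase (Finset.mem_of_mem_erase hm)
      simp [hF, hmi, hmj]
    rw [Finset.prod_congr rfl h2]
    simp only [hF, if_pos rfl, if_neg hij.symm, if_true, eq_self_iff_true]
    ring
  rw [Finset.sum_congr rfl (fun v _ => h1 v), key, extract_two hij]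
  have h3 : ∀ m ∈ (univ.erase i).erase j, (∑ x, F m x) = 1 := fun m hm => by
    have hmj := Finset.ne_of_mem_erase hm
    have hmi := Finset.ne_of_mem_erase (Finset.mem_of_mem_erase hm)
    simp only [hF, if_neg hmi, if_neg hmj]; exact hp1
  rw [Finset.prod_congr rfl h3, Finset.prod_const_one, mul_one]
  simp only [hF, if_pos rfl, if_neg hij.symm, if_true, eq_self_iff_true]

private lemma count_eq {k : ℕ} (v : Fin k → U) (u : U) :
    ((univ.filter fun i => v i = u).card : ℝ) = ∑ i, (if v i = u then (1:ℝ) else 0) := by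
  rw [Finset.card_filter]
  push_cast
  rfl

private lemma ind_sum (p : U → ℝ) (u : U) :
    ∑ x, p x * (if x = u then (1:ℝ) else 0) = p u := by
  simp [mul_ite]

private lemma sum_w_count (p : U → ℝ) (hp1 : ∑ u, p u = 1) {k : ℕ} (u : U) :
    ∑ v : Fin k → U, (∏ m, p (v m)) * ((univ.filter fun i => v i = u).card : ℝ)
      = k * p u := by
  calc ∑ v : Fin k → U, (∏ m, p (v m)) * ((univ.filter fun i => v i = u).card : ℝ)
      = ∑ v : Fin k → U, ∑ i, (∏ m, p (v m)) * (if v i = u then (1:ℝ) else 0) := by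
        refine Finset.sum_congr rfl fun v _ => ?_
        rw [count_eq, Finset.mul_sum]
    _ = ∑ i : Fin k, ∑ v : Fin k → U, (∏ m, p (v m)) * (if v i = u then (1:ℝ) else 0) :=
        Finset.sum_comm
    _ = ∑ i : Fin k, p u := by
        refine Finset.sum_congr rfl fun i _ => ?_
        rw [sum_w_single p hp1 i (fun x => if x = u then (1:ℝ) else 0), ind_sum]
    _ = k * p u := by simp [mul_comm]

private lemma sum_w_count_sq (p : U → ℝ) (hp1 : ∑ u, p u = 1) {k : ℕ} (u : U) :
    ∑ v : Fin k → U, (∏ m, p (v m)) * ((univ.filter fun i => v i = u).card : ℝ) ^ 2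
      = k * p u + (k : ℝ) * ((k - 1 : ℕ) : ℝ) * p u ^ 2 := by
  have hI : ∀ (x : U), (if x = u then (1:ℝ) else 0) * (if x = u then (1:ℝ) else 0)
      = (if x = u then (1:ℝ) else 0) := fun x => by split_ifs <;> ring
  calc ∑ v : Fin k → U, (∏ m, p (v m)) * ((univ.filter fun i => v i = u).card : ℝ) ^ 2
      = ∑ v : Fin k → U, ∑ i, ∑ j, (∏ m, p (v m)) *
          ((if v i = u then (1:ℝ) else 0) * (if v j = u then (1:ℝ) else 0)) := by
        refine Finset.sum_congr rfl fun v _ => ?_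
        rw [count_eq, sq, Finset.sum_mul_sum]
        rw [Finset.mul_sum]
        exact Finset.sum_congr rfl fun i _ => by rw [Finset.mul_sum]
    _ = ∑ i : Fin k, ∑ j : Fin k, ∑ v : Fin k → U, (∏ m, p (v m)) *
          ((if v i = u then (1:ℝ) else 0) * (if v j = u then (1:ℝ) else 0)) := by
        rw [Finset.sum_comm]
        exact Finset.sum_congr rfl fun i _ => Finset.sum_comm
    _ = ∑ i : Fin k, (p u + ∑ j ∈ univ.erase i, p u * p u) := by
        refine Finset.sum_congr rfl fun i _ => ?_
        rw [← Finset.add_sum_erase _ _ (mem_univ i)]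
        congr 1
        · rw [Finset.sum_congr rfl fun v _ => by rw [hI (v i)],
            sum_w_single p hp1 i (fun x => if x = u then (1:ℝ) else 0), ind_sum]
        · refine Finset.sum_congr rfl fun j hj => ?_
          have hij : i ≠ j := (Finset.ne_of_mem_erase hj).symm
          have hpair := sum_w_pair p hp1 hij (fun x => if x = u then (1:ℝ) else 0)
            (fun x => if x = u then (1:ℝ) else 0)
          rw [ind_sum] at hpair
          exact hpair
    _ = k * p u + (k : ℝ) * ((k - 1 : ℕ) : ℝ) * p u ^ 2 := by
        rw [Finset.sum_add_distrib]
        simp [Finset.sum_const, Finset.card_erase_of_mem, sq]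
        ring

private lemma sum_w_var (p : U → ℝ) (hp1 : ∑ u, p u = 1) {k : ℕ} (hk : 1 ≤ k) (u : U) :
    ∑ v : Fin k → U,
        (∏ m, p (v m)) * (((univ.filter fun i => v i = u).card : ℝ) - k * p u) ^ 2
      = k * (p u * (1 - p u)) := by
  have expand : ∑ v : Fin k → U,
      (∏ m, p (v m)) * (((univ.filter fun i => v i = u).card : ℝ) - k * p u) ^ 2
      = (∑ v : Fin k → U, (∏ m, p (v m)) * ((univ.filter fun i => v i = u).card : ℝ) ^ 2)
        - 2 * ((k : ℝ) * p u) *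
          (∑ v : Fin k → U, (∏ m, p (v m)) * ((univ.filter fun i => v i = u).card : ℝ))
        + ((k : ℝ) * p u) ^ 2 * (∑ v : Fin k → U, ∏ m, p (v m)) := by
    rw [Finset.mul_sum, Finset.mul_sum, ← Finset.sum_sub_distrib, ← Finset.sum_add_distrib]
    exact Finset.sum_congr rfl fun v _ => by ring
  rw [expand, sum_w_count_sq p hp1 u, sum_w_count p hp1 u, sum_w_one p hp1]
  have : ((k - 1 : ℕ) : ℝ) = (k : ℝ) - 1 := by
    rw [Nat.cast_sub hk]; simp
  rw [this]; ring

private lemma sum_w_chi (p : U → ℝ) (hp0 : ∀ u, 0 ≤ p u) (hp1 : ∑ u, p u = 1)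
    {k : ℕ} (hk : 1 ≤ k) :
    ∑ v : Fin k → U, (∏ m, p (v m)) *
        (∑ u ∈ univ.filter fun u => 0 < p u, (empDist v u - p u) ^ 2 / p u)
      ≤ ((univ.filter fun u : U => 0 < p u).card : ℝ) / k := by
  have hk0 : (0:ℝ) < k := by exact_mod_cast hk
  calc ∑ v : Fin k → U, (∏ m, p (v m)) *
        (∑ u ∈ univ.filter fun u => 0 < p u, (empDist v u - p u) ^ 2 / p u)
      = ∑ u ∈ univ.filter fun u => 0 < p u,
          ∑ v : Fin k → U, (∏ m, p (v m)) * ((empDist v u - p u) ^ 2 / p u) := by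
        rw [Finset.sum_comm]
        exact Finset.sum_congr rfl fun v _ => Finset.mul_sum _ _ _
    _ = ∑ u ∈ univ.filter fun u => 0 < p u, (1 - p u) / k := by
        refine Finset.sum_congr rfl fun u hu => ?_
        have hpu : 0 < p u := (Finset.mem_filter.1 hu).2
        have step : ∀ v : Fin k → U, (∏ m, p (v m)) * ((empDist v u - p u) ^ 2 / p u)
            = ((∏ m, p (v m)) * (((univ.filter fun i => v i = u).card : ℝ) - k * p u) ^ 2)
              * (1 / ((k:ℝ)^2 * p u)) := by
          intro v
          have : (empDist v u - p u) ^ 2 / p u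
              = (((univ.filter fun i => v i = u).card : ℝ) - k * p u) ^ 2
                * (1 / ((k:ℝ)^2 * p u)) := by
            simp only [empDist]
            field_simp
            try ring
          rw [this]; ring
        rw [Finset.sum_congr rfl fun v _ => step v, ← Finset.sum_mul,
          sum_w_var p hp1 hk u]
        field_simp
        try ring
    _ ≤ ∑ u ∈ univ.filter fun u => 0 < p u, 1 / (k:ℝ) := by
        refine Finset.sum_le_sum fun u hu => ?_
        have hpu : 0 < p u := (Finset.mem_filter.1 hu).2
        gcongr
        linarith
    _ = ((univ.filter fun u : U => 0 < p u).card : ℝ) / k := by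
        rw [Finset.sum_const, nsmul_eq_mul]
        ring

private lemma pointwise (p : U → ℝ) (hp0 : ∀ u, 0 ≤ p u) (hp1 : ∑ u, p u = 1)
    {k : ℕ} (hk : 1 ≤ k) {δ : ℝ} (hδ0 : 0 < δ) (hδ1 : δ < 1)
    (v : Fin k → U) (hsupp : ∀ i, 0 < p (v i))
    (hchi : ∑ u ∈ univ.filter fun u => 0 < p u, (empDist v u - p u) ^ 2 / p u < δ ^ 2) :
    (∑ u ∈ Finset.univ.filter (fun u => 0 < empDist v u),
        empDist v u * Real.log (empDist v u / p u)) < δ ∧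
    (∑ u, |empDist v u - p u|) < δ := by
  have hk0 : (0:ℝ) < k := by exact_mod_cast hk
  set q : U → ℝ := empDist v with hq
  have q0 : ∀ u, 0 ≤ q u := fun u => by
    simp only [hq, empDist]
    positivity
  have qpos_imp : ∀ u, 0 < q u → 0 < p u := by
    intro u hu
    simp only [hq, empDist] at hu
    have hne : (univ.filter fun i => v i = u).Nonempty := by
      rw [← Finset.card_pos]
      by_contra h
      push_neg at h
      have h0 : (univ.filter fun i => v i = u).card = 0 := Nat.le_zero.1 h
      rw [h0] at hu
      simp at hu
    obtain ⟨i, hi⟩ := hne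
    have : v i = u := (Finset.mem_filter.1 hi).2
    rw [← this]; exact hsupp i
  have qzero_off : ∀ u, ¬ 0 < p u → q u = 0 := by
    intro u hu
    by_contra h
    exact hu (qpos_imp u (lt_of_le_of_ne (q0 u) (Ne.symm h)))
  have qsum : ∑ u, q u = 1 := by
    have hcard : (univ : Finset (Fin k)).card
        = ∑ u, (univ.filter fun i => v i = u).card :=
      Finset.card_eq_sum_card_fiberwise fun i _ => mem_univ (v i)
    simp only [hq, empDist, ← Finset.sum_div]
    rw [← Nat.cast_sum, ← hcard]
    simp [Finset.card_univ]
    omega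
  have psum_plus : ∑ u ∈ univ.filter fun u => 0 < p u, p u = 1 := by
    rw [← hp1]
    exact Finset.sum_subset (Finset.filter_subset _ _) fun u _ hu =>
      le_antisymm (not_lt.1 fun hpos =>
        hu (Finset.mem_filter.2 ⟨mem_univ u, hpos⟩)) (hp0 u)
  have qsum_plus : ∑ u ∈ univ.filter fun u => 0 < p u, q u = 1 := by
    rw [← qsum]
    exact Finset.sum_subset (Finset.filter_subset _ _) fun u _ hu =>
      qzero_off u fun hpos =>
        hu (Finset.mem_filter.2 ⟨mem_univ u, hpos⟩)
  have hδ2 : δ ^ 2 < δ := by nlinarith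
  constructor
  · -- KL part
    have step1 : ∑ u ∈ univ.filter (fun u => 0 < q u), q u * Real.log (q u / p u)
        ≤ ∑ u ∈ univ.filter (fun u => 0 < q u), (q u ^ 2 / p u - q u) := by
      refine Finset.sum_le_sum fun u hu => ?_
      have hqu : 0 < q u := (Finset.mem_filter.1 hu).2
      have hpu : 0 < p u := qpos_imp u hqu
      have hlog : Real.log (q u / p u) ≤ q u / p u - 1 :=
        Real.log_le_sub_one_of_pos (div_pos hqu hpu)
      calc q u * Real.log (q u / p u) ≤ q u * (q u / p u - 1) :=
            mul_le_mul_of_nonneg_left hlog hqu.le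
        _ = q u ^ 2 / p u - q u := by field_simp
    have step2 : ∑ u ∈ univ.filter (fun u => 0 < q u), (q u ^ 2 / p u - q u)
        = ∑ u ∈ univ.filter (fun u => 0 < p u), (q u ^ 2 / p u - q u) := by
      refine Finset.sum_subset (fun u hu => ?_) (fun u _ hu => ?_)
      · exact Finset.mem_filter.2 ⟨mem_univ u, qpos_imp u (Finset.mem_filter.1 hu).2⟩
      · have hqu : q u = 0 := by
          by_contra h
          exact hu (Finset.mem_filter.2
            ⟨mem_univ u, lt_of_le_of_ne (q0 u) (Ne.symm h)⟩)
        simp [hqu]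
    have step3 : ∑ u ∈ univ.filter (fun u => 0 < p u), (q u ^ 2 / p u - q u)
        = ∑ u ∈ univ.filter (fun u => 0 < p u), (q u - p u) ^ 2 / p u := by
      have per : ∀ u ∈ univ.filter (fun u => 0 < p u),
          (q u - p u) ^ 2 / p u = (q u ^ 2 / p u - q u) + (p u - q u) := by
        intro u hu
        have hpu : p u ≠ 0 := (Finset.mem_filter.1 hu).2.ne'
        field_simp
        ring
      have h1 := Finset.sum_congr rfl per
      have h2 : ∑ u ∈ univ.filter (fun u => 0 < p u),
          ((q u ^ 2 / p u - q u) + (p u - q u))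
          = (∑ u ∈ univ.filter (fun u => 0 < p u), (q u ^ 2 / p u - q u))
            + ((∑ u ∈ univ.filter (fun u => 0 < p u), p u)
              - ∑ u ∈ univ.filter (fun u => 0 < p u), q u) := by
        rw [Finset.sum_add_distrib]
        congr 1
        exact Finset.sum_sub_distrib _ _
      rw [h1, h2, psum_plus, qsum_plus]
      ring
    calc ∑ u ∈ Finset.univ.filter (fun u => 0 < empDist v u),
          empDist v u * Real.log (empDist v u / p u)
        ≤ ∑ u ∈ univ.filter (fun u => 0 < p u), (q u - p u) ^ 2 / p u := by
          rw [← step3, ← step2]; exact step1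
      _ < δ ^ 2 := hchi
      _ < δ := hδ2
  · -- variational distance part
    have hd : ∑ u, |q u - p u| = ∑ u ∈ univ.filter fun u => 0 < p u, |q u - p u| := by
      refine (Finset.sum_subset (Finset.filter_subset _ _) fun u _ hu => ?_).symm
      have hnp : ¬ 0 < p u := fun hpos => hu (Finset.mem_filter.2 ⟨mem_univ u, hpos⟩)
      have hpu : p u = 0 := le_antisymm (not_lt.1 hnp) (hp0 u)
      have hqu : q u = 0 := qzero_off u hnp
      simp [hpu, hqu]
    have cs := Finset.sum_mul_sq_le_sq_mul_sq (univ.filter fun u => 0 < p u)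
      (fun u => Real.sqrt (p u)) (fun u => |q u - p u| / Real.sqrt (p u))
    have e1 : ∀ u ∈ univ.filter fun u => 0 < p u,
        Real.sqrt (p u) * (|q u - p u| / Real.sqrt (p u)) = |q u - p u| := by
      intro u hu
      have : Real.sqrt (p u) ≠ 0 := (Real.sqrt_pos.2 (Finset.mem_filter.1 hu).2).ne'
      field_simp
    have e2 : ∀ u ∈ univ.filter fun u => 0 < p u, Real.sqrt (p u) ^ 2 = p u :=
      fun u hu => Real.sq_sqrt (hp0 u)
    have e3 : ∀ u ∈ univ.filter fun u => 0 < p u,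
        (|q u - p u| / Real.sqrt (p u)) ^ 2 = (q u - p u) ^ 2 / p u := by
      intro u hu
      rw [div_pow, sq_abs, Real.sq_sqrt (hp0 u)]
    rw [Finset.sum_congr rfl e1, Finset.sum_congr rfl e2, Finset.sum_congr rfl e3,
      psum_plus, one_mul] at cs
    have hlt : (∑ u ∈ univ.filter fun u => 0 < p u, |q u - p u|) ^ 2 < δ ^ 2 :=
      lt_of_le_of_lt cs hchi
    have : ∑ u ∈ univ.filter fun u => 0 < p u, |q u - p u| < δ :=
      lt_of_pow_lt_pow_left₀ 2 hδ0.le hlt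
    rw [hd]; exact this

end Aux

/-- If `X_1, …, X_k` are i.i.d. with common distribution `p` on the
finite set `U`, `p̂` is the empirical distribution, `U⁺ = {u : p_u > 0}`, `0 < δ < 1`,
`ε > 0` and `k ≥ 2|U⁺|/(ε·δ²)`, then with probability at least `1 - ε` both
`d_KL(p̂, p) < δ` and `d(p̂, p) < δ` hold simultaneously.  (The probability of an event
of samples is the total product weight `∏ i, p (v i)` of the tuples `v` in it.) -/
theorem stmt9 {U : Type*} [Fintype U]
    (p : U → ℝ) (hp0 : ∀ u, 0 ≤ p u) (hp1 : ∑ u, p u = 1)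
    (δ : ℝ) (hδ0 : 0 < δ) (hδ1 : δ < 1) (ε : ℝ) (hε : 0 < ε) (k : ℕ)
    (hk : 2 * ((Finset.univ.filter fun u : U => 0 < p u).card : ℝ) / (ε * δ ^ 2) ≤ k) :
    1 - ε ≤
      ∑ v ∈ Finset.univ.filter (fun v : Fin k → U =>
          (∑ u ∈ Finset.univ.filter (fun u => 0 < empDist v u),
            empDist v u * Real.log (empDist v u / p u)) < δ ∧
          (∑ u, |empDist v u - p u|) < δ),
        ∏ i, p (v i) := by
  have hεδ : 0 < ε * δ ^ 2 := by positivity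
  -- U⁺ is nonempty
  have hm1 : 1 ≤ ((Finset.univ.filter fun u : U => 0 < p u).card : ℝ) := by
    have : (Finset.univ.filter fun u : U => 0 < p u).Nonempty := by
      by_contra h
      rw [Finset.not_nonempty_iff_eq_empty] at h
      have : ∑ u, p u = 0 := by
        refine Finset.sum_eq_zero fun u _ => ?_
        by_contra hne
        have hpos : 0 < p u := lt_of_le_of_ne (hp0 u) (Ne.symm hne)
        have : u ∈ Finset.univ.filter fun u : U => 0 < p u :=
          Finset.mem_filter.2 ⟨Finset.mem_univ u, hpos⟩
        rw [h] at this
        exact absurd this (Finset.notMem_empty u)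
      rw [hp1] at this; norm_num at this
    exact_mod_cast Finset.card_pos.2 this
  have hk1 : 1 ≤ k := by
    by_contra h
    push_neg at h
    interval_cases k
    simp at hk
    have : 0 < 2 * ((Finset.univ.filter fun u : U => 0 < p u).card : ℝ) / (ε * δ ^ 2) := by
      positivity
    linarith
  have hk0 : (0:ℝ) < k := by exact_mod_cast hk1
  have hw0 : ∀ v : Fin k → U, 0 ≤ ∏ m, p (v m) :=
    fun v => Finset.prod_nonneg fun m _ => hp0 _
  have hχ0 : ∀ v : Fin k → U,
      0 ≤ ∑ u ∈ univ.filter fun u => 0 < p u, (empDist v u - p u) ^ 2 / p u :=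
    fun v => Finset.sum_nonneg fun u hu =>
      div_nonneg (sq_nonneg _) (hp0 u)
  have hmk : ((Finset.univ.filter fun u : U => 0 < p u).card : ℝ) / k ≤ ε * δ ^ 2 / 2 := by
    rw [div_le_iff₀ hεδ] at hk
    rw [div_le_iff₀ hk0]
    nlinarith
  have hEchi := sum_w_chi p hp0 hp1 hk1
  -- Markov inequality
  have hMarkov : ∑ v ∈ univ.filter (fun v : Fin k → U =>
      ¬ (∑ u ∈ univ.filter fun u => 0 < p u, (empDist v u - p u) ^ 2 / p u) < δ ^ 2),
      ∏ m, p (v m) ≤ ε / 2 := by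
    have h1 : δ ^ 2 * ∑ v ∈ univ.filter (fun v : Fin k → U =>
        ¬ (∑ u ∈ univ.filter fun u => 0 < p u, (empDist v u - p u) ^ 2 / p u) < δ ^ 2),
        (∏ m, p (v m))
        ≤ ∑ v ∈ univ.filter (fun v : Fin k → U =>
          ¬ (∑ u ∈ univ.filter fun u => 0 < p u, (empDist v u - p u) ^ 2 / p u) < δ ^ 2),
          (∏ m, p (v m)) *
            (∑ u ∈ univ.filter fun u => 0 < p u, (empDist v u - p u) ^ 2 / p u) := by
      rw [Finset.mul_sum]
      refine Finset.sum_le_sum fun v hv => ?_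
      have hvge := not_lt.1 (Finset.mem_filter.1 hv).2
      calc δ ^ 2 * (∏ m, p (v m)) = (∏ m, p (v m)) * δ ^ 2 := mul_comm _ _
        _ ≤ (∏ m, p (v m)) *
            (∑ u ∈ univ.filter fun u => 0 < p u, (empDist v u - p u) ^ 2 / p u) :=
          mul_le_mul_of_nonneg_left hvge (hw0 v)
    have h2 : ∑ v ∈ univ.filter (fun v : Fin k → U =>
        ¬ (∑ u ∈ univ.filter fun u => 0 < p u, (empDist v u - p u) ^ 2 / p u) < δ ^ 2),
        (∏ m, p (v m)) *
          (∑ u ∈ univ.filter fun u => 0 < p u, (empDist v u - p u) ^ 2 / p u)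
        ≤ ∑ v : Fin k → U, (∏ m, p (v m)) *
          (∑ u ∈ univ.filter fun u => 0 < p u, (empDist v u - p u) ^ 2 / p u) :=
      Finset.sum_le_sum_of_subset_of_nonneg (Finset.filter_subset _ _)
        fun v _ _ => mul_nonneg (hw0 v) (hχ0 v)
    have h3 := le_trans h1 (le_trans h2 (le_trans hEchi hmk))
    have hδ2 : (0:ℝ) < δ ^ 2 := by positivity
    nlinarith [h3, hδ2]
  have htot := Finset.sum_filter_add_sum_filter_not (univ : Finset (Fin k → U))
    (fun v : Fin k → U =>
      (∑ u ∈ univ.filter fun u => 0 < p u, (empDist v u - p u) ^ 2 / p u) < δ ^ 2)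
    (fun v => ∏ m, p (v m))
  rw [sum_w_one p hp1] at htot
  have hA : 1 - ε / 2 ≤ ∑ v ∈ univ.filter (fun v : Fin k → U =>
      (∑ u ∈ univ.filter fun u => 0 < p u, (empDist v u - p u) ^ 2 / p u) < δ ^ 2),
      ∏ m, p (v m) := by linarith
  -- restrict to the support
  have hAS : ∑ v ∈ univ.filter (fun v : Fin k → U =>
      (∑ u ∈ univ.filter fun u => 0 < p u, (empDist v u - p u) ^ 2 / p u) < δ ^ 2),
      ∏ m, p (v m)
      = ∑ v ∈ univ.filter (fun v : Fin k → U =>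
        ((∑ u ∈ univ.filter fun u => 0 < p u, (empDist v u - p u) ^ 2 / p u) < δ ^ 2)
          ∧ ∀ i, 0 < p (v i)),
        ∏ m, p (v m) := by
    refine (Finset.sum_subset (fun v hv => ?_) (fun v hv hv' => ?_)).symm
    · exact Finset.mem_filter.2 ⟨mem_univ v, (Finset.mem_filter.1 hv).2.1⟩
    · have h1 := (Finset.mem_filter.1 hv).2
      have : ¬ ∀ i, 0 < p (v i) := by
        intro hall
        exact hv' (Finset.mem_filter.2 ⟨mem_univ v, h1, hall⟩)
      push_neg at this
      obtain ⟨i, hi⟩ := this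
      exact Finset.prod_eq_zero (mem_univ i) (le_antisymm hi (hp0 (v i)))
  have hsub : univ.filter (fun v : Fin k → U =>
      ((∑ u ∈ univ.filter fun u => 0 < p u, (empDist v u - p u) ^ 2 / p u) < δ ^ 2)
        ∧ ∀ i, 0 < p (v i))
      ⊆ Finset.univ.filter (fun v : Fin k → U =>
          (∑ u ∈ Finset.univ.filter (fun u => 0 < empDist v u),
            empDist v u * Real.log (empDist v u / p u)) < δ ∧
          (∑ u, |empDist v u - p u|) < δ) := by
    intro v hv
    obtain ⟨-, hchi, hsupp⟩ := Finset.mem_filter.1 hv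
    exact Finset.mem_filter.2 ⟨mem_univ v,
      pointwise p hp0 hp1 hk1 hδ0 hδ1 v hsupp hchi⟩
  calc 1 - ε ≤ 1 - ε / 2 := by linarith
    _ ≤ _ := hA
    _ = _ := hAS
    _ ≤ _ := Finset.sum_le_sum_of_subset_of_nonneg hsub fun v _ _ => hw0 v
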